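/- Suppose Ĉ and τ are differentiable in the second variable, and for all u,v ≥ 0 one has Ĉ(ut,vt)/(t^κ ℓ(t)) → τ(u,v) as t↓0, where ℓ is slowly varying at 0. If for each fixed t the function v ↦ ∂Ĉ/∂v(ut, vt)·t is the derivative of v ↦ Ĉ(ut,vt), and ∂Ĉ/∂v(u,v) is nondecreasing in u and nonincreasing in v, then for all u > 0 and v > 0, lim_{t↓0} Ĉ_v(ut, vt)/(t^{κ−1} ℓ(t)) = τ_v(u,v), where Ĉ_v and τ_v denote the partial derivatives with respect to the second argument. -/

import Mathlib

open Filter Set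
open scoped Topology

lemma mvt_le' {f f' : ℝ → ℝ} (hf : ∀ x, HasDerivAt f (f' x) x) {C a b : ℝ} (hab : a ≤ b)
    (hC : ∀ x ∈ Icc a b, f' x ≤ C) : f b - f a ≤ C * (b - a) := by
  have hg : ∀ x : ℝ, HasDerivAt (fun y => C * y - f y) (C - f' x) x := by
    intro x
    exact (((hasDerivAt_id x).const_mul C).sub (hf x)).congr_deriv (by simp)
  have mono : MonotoneOn (fun y => C * y - f y) (Icc a b) := by
    apply monotoneOn_of_deriv_nonneg (convex_Icc a b)
    · exact ((continuous_const.mul continuous_id).sub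
        (Differentiable.continuous (fun x => (hf x).differentiableAt))).continuousOn
    · exact fun x _ => ((hg x).differentiableAt).differentiableWithinAt
    · intro x hx
      rw [(hg x).deriv]
      have := hC x (Ioo_subset_Icc_self (by simpa [interior_Icc] using hx))
      linarith
  have h1 := mono (left_mem_Icc.2 hab) (right_mem_Icc.2 hab) hab
  simp only at h1
  nlinarith [h1]

lemma mvt_ge' {f f' : ℝ → ℝ} (hf : ∀ x, HasDerivAt f (f' x) x) {C a b : ℝ} (hab : a ≤ b)
    (hC : ∀ x ∈ Icc a b, C ≤ f' x) : C * (b - a) ≤ f b - f a := by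
  have := mvt_le' (f := fun x => -f x) (f' := fun x => -f' x)
    (fun x => (hf x).neg) hab (C := -C) (fun x hx => neg_le_neg (hC x hx))
  nlinarith [this]

/-- Convergence of the tail order limit passes to partial derivatives:
if `Ĉ(ut,vt)/(t^κ ℓ(t)) → τ(u,v)` as `t ↓ 0`, the map `v ↦ Ĉ_v(ut,vt)·t` is the
derivative of `v ↦ Ĉ(ut,vt)`, `τ_v` is the partial derivative of `τ` in its second
argument, and `Ĉ_v(u,v)` is nondecreasing in `u` and nonincreasing in `v`, then for
all `u > 0`, `v > 0`, `Ĉ_v(ut,vt)/(t^{κ-1} ℓ(t)) → τ_v(u,v)` as `t ↓ 0`. -/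
theorem tail_order_derivative_convergence
    (Chat Cv τ τv : ℝ → ℝ → ℝ) (κ : ℝ) (ℓ : ℝ → ℝ)
    (hκ : κ ∈ Icc (1:ℝ) 2)
    (hℓpos : ∀ t : ℝ, 0 < t → 0 < ℓ t)
    (hℓsv : ∀ s : ℝ, 0 < s →
      Tendsto (fun t => ℓ (s * t) / ℓ t) (𝓝[>] (0:ℝ)) (𝓝 1))
    (hlim : ∀ u v : ℝ, 0 ≤ u → 0 ≤ v →
      Tendsto (fun t => Chat (u * t) (v * t) / (t ^ κ * ℓ t)) (𝓝[>] (0:ℝ)) (𝓝 (τ u v)))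
    (hCv : ∀ u : ℝ, ∀ t : ℝ, 0 < t → ∀ v : ℝ,
      HasDerivAt (fun w => Chat (u * t) (w * t)) (Cv (u * t) (v * t) * t) v)
    (hτv : ∀ u v : ℝ, HasDerivAt (fun w => τ u w) (τv u v) v)
    (hCv_mono : ∀ v, Monotone fun u => Cv u v)
    (hCv_anti : ∀ u, Antitone fun v => Cv u v) :
    ∀ u : ℝ, 0 < u → ∀ v : ℝ, 0 < v →
      Tendsto (fun t => Cv (u * t) (v * t) / (t ^ (κ - 1) * ℓ t))
        (𝓝[>] (0:ℝ)) (𝓝 (τv u v)) := by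
  intro u hu v hv
  have hrw : ∀ t : ℝ, 0 < t →
      Cv (u * t) (v * t) / (t ^ (κ - 1) * ℓ t)
        = Cv (u * t) (v * t) * t / (t ^ κ * ℓ t) := by
    intro t ht
    have h1 : t ^ (κ - 1) = t ^ κ / t := by
      rw [Real.rpow_sub ht, Real.rpow_one]
    have h2 : (0:ℝ) < t ^ κ := Real.rpow_pos_of_pos ht κ
    have h3 : ℓ t ≠ 0 := (hℓpos t ht).ne'
    rw [h1]
    field_simp
  have hslope : Tendsto (slope (τ u) v) (𝓝[≠] v) (𝓝 (τv u v)) :=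
    hasDerivAt_iff_tendsto_slope.1 (hτv u v)
  rw [tendsto_order]
  constructor
  · -- lower bound
    intro a' ha'
    have hslopeR : Tendsto (slope (τ u) v) (𝓝[>] v) (𝓝 (τv u v)) :=
      hslope.mono_left (nhdsWithin_mono v (fun x hx => (ne_of_lt hx).symm))
    obtain ⟨w, hw1, hw2⟩ := ((hslopeR.eventually (eventually_gt_nhds ha')).and
      self_mem_nhdsWithin).exists
    have hvw : v < w := hw2
    rw [slope_def_field] at hw1
    have hg : Tendsto
        (fun t => (Chat (u * t) (w * t) / (t ^ κ * ℓ t)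
          - Chat (u * t) (v * t) / (t ^ κ * ℓ t)) / (w - v))
        (𝓝[>] (0:ℝ)) (𝓝 ((τ u w - τ u v) / (w - v))) :=
      ((hlim u w hu.le (hv.trans hvw).le).sub (hlim u v hu.le hv.le)).div_const _
    filter_upwards [hg.eventually (eventually_gt_nhds hw1), self_mem_nhdsWithin]
      with t hgt ht
    have ht' : (0:ℝ) < t := ht
    rw [hrw t ht']
    refine lt_of_lt_of_le hgt ?_
    have hD : (0:ℝ) < t ^ κ * ℓ t :=
      mul_pos (Real.rpow_pos_of_pos ht' κ) (hℓpos t ht')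
    have key : Chat (u * t) (w * t) - Chat (u * t) (v * t)
        ≤ (Cv (u * t) (v * t) * t) * (w - v) := by
      refine mvt_le' (f := fun x => Chat (u * t) (x * t))
        (f' := fun x => Cv (u * t) (x * t) * t) (hCv u t ht') hvw.le ?_
      intro x hx
      exact mul_le_mul_of_nonneg_right
        (hCv_anti (u * t) (mul_le_mul_of_nonneg_right hx.1 ht'.le)) ht'.le
    rw [div_sub_div_same, div_div,
      div_le_div_iff₀ (mul_pos hD (sub_pos.2 hvw)) hD]
    nlinarith [mul_le_mul_of_nonneg_right key hD.le]
  · -- upper bound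
    intro a' ha'
    have hslopeL : Tendsto (slope (τ u) v) (𝓝[<] v) (𝓝 (τv u v)) :=
      hslope.mono_left (nhdsWithin_mono v (fun x hx => ne_of_lt hx))
    obtain ⟨w, ⟨hw1, hw0⟩, hw2⟩ := (((hslopeL.eventually (eventually_lt_nhds ha')).and
      ((eventually_gt_nhds hv).filter_mono nhdsWithin_le_nhds)).and
      self_mem_nhdsWithin).exists
    have hwv : w < v := hw2
    rw [slope_def_field] at hw1
    have hg : Tendsto
        (fun t => (Chat (u * t) (w * t) / (t ^ κ * ℓ t)
          - Chat (u * t) (v * t) / (t ^ κ * ℓ t)) / (w - v))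
        (𝓝[>] (0:ℝ)) (𝓝 ((τ u w - τ u v) / (w - v))) :=
      ((hlim u w hu.le hw0.le).sub (hlim u v hu.le hv.le)).div_const _
    filter_upwards [hg.eventually (eventually_lt_nhds hw1), self_mem_nhdsWithin]
      with t hgt ht
    have ht' : (0:ℝ) < t := ht
    rw [hrw t ht']
    refine lt_of_le_of_lt ?_ hgt
    have hD : (0:ℝ) < t ^ κ * ℓ t :=
      mul_pos (Real.rpow_pos_of_pos ht' κ) (hℓpos t ht')
    have key : (Cv (u * t) (v * t) * t) * (v - w)
        ≤ Chat (u * t) (v * t) - Chat (u * t) (w * t) := by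
      refine mvt_ge' (f := fun x => Chat (u * t) (x * t))
        (f' := fun x => Cv (u * t) (x * t) * t) (hCv u t ht') hwv.le ?_
      intro x hx
      exact mul_le_mul_of_nonneg_right
        (hCv_anti (u * t) (mul_le_mul_of_nonneg_right hx.2 ht'.le)) ht'.le
    have hneg : (t ^ κ * ℓ t) * (w - v) < 0 :=
      mul_neg_of_pos_of_neg hD (sub_neg.2 hwv)
    rw [div_sub_div_same, div_div, le_div_iff_of_neg hneg]
    have hcancel : Cv (u * t) (v * t) * t / (t ^ κ * ℓ t) * ((t ^ κ * ℓ t) * (w - v))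
        = Cv (u * t) (v * t) * t * (w - v) := by
      have h3 : ℓ t ≠ 0 := (hℓpos t ht').ne'
      have h2 : t ^ κ ≠ 0 := (Real.rpow_pos_of_pos ht' κ).ne'
      field_simp
    rw [hcancel]
    nlinarith [key]
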